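/- There exists a compact set S ⊆ ℂ with two-dimensional Lebesgue measure zero and a homeomorphism h : ℂ → ℂ such that h is holomorphic on ℂ \ S but h is not of the form h(z) = a·z + b for any a, b ∈ ℂ. That is, there exists a conformally non-removable compact set of Lebesgue measure zero. -/

import Mathlib

open MeasureTheory Filter Topology

namespace NonremAux

/-- Approximations to the Cantor function. -/
noncomputable def Cn : ℕ → ℝ → ℝ
  | 0 => fun x => max 0 (min x 1)
  | (n+1) => fun x => (Cn n (3*x) + Cn n (3*x - 2)) / 2

lemma Cn_cont : ∀ n, Continuous (Cn n)
  | 0 => continuous_const.max (continuous_id.min continuous_const)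
  | (n+1) => (((Cn_cont n).comp (by fun_prop)).add
      ((Cn_cont n).comp (by fun_prop))).div_const 2

lemma Cn_low : ∀ n, ∀ x : ℝ, x ≤ 0 → Cn n x = 0
  | 0, x, hx => by
      simp only [Cn]
      rw [max_eq_left]
      exact (min_le_left x 1).trans hx
  | (n+1), x, hx => by
      simp only [Cn, Cn_low n (3*x) (by linarith), Cn_low n (3*x-2) (by linarith)]
      norm_num

lemma Cn_high : ∀ n, ∀ x : ℝ, 1 ≤ x → Cn n x = 1
  | 0, x, hx => by simp [Cn, min_eq_right hx]
  | (n+1), x, hx => by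
      simp only [Cn, Cn_high n (3*x) (by linarith), Cn_high n (3*x-2) (by linarith)]
      norm_num

lemma Cn_mem : ∀ n, ∀ x : ℝ, Cn n x ∈ Set.Icc (0:ℝ) 1
  | 0, x => ⟨le_max_left _ _, max_le (by norm_num) (min_le_right _ _)⟩
  | (n+1), x => by
      have h1 := Cn_mem n (3*x); have h2 := Cn_mem n (3*x-2)
      simp only [Cn, Set.mem_Icc] at *
      constructor <;> [linarith [h1.1, h2.1]; linarith [h1.2, h2.2]]

lemma Cn_diff_bound : ∀ n, ∀ x : ℝ, |Cn (n+1) x - Cn n x| ≤ (1/2)^n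
  | 0, x => by
      have h1 := Cn_mem 1 x; have h2 := Cn_mem 0 x
      simp only [Set.mem_Icc] at *
      rw [abs_le]; constructor <;> [linarith [h1.1, h2.2]; linarith [h1.2, h2.1]]
  | (n+1), x => by
      have key : Cn (n+2) x - Cn (n+1) x
          = ((Cn (n+1) (3*x) - Cn n (3*x)) + (Cn (n+1) (3*x-2) - Cn n (3*x-2))) / 2 := by
        show ((Cn (n+1) (3*x) + Cn (n+1) (3*x-2))/2) - ((Cn n (3*x) + Cn n (3*x-2))/2) = _
        ring
      rcases le_or_gt x (1/3 : ℝ) with hx | hx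
      · have hz : Cn (n+1) (3*x-2) - Cn n (3*x-2) = 0 := by
          rw [Cn_low (n+1) _ (by linarith), Cn_low n _ (by linarith)]; ring
        have := Cn_diff_bound n (3*x)
        rw [key, hz, add_zero]
        calc |(Cn (n+1) (3*x) - Cn n (3*x)) / 2|
            = |Cn (n+1) (3*x) - Cn n (3*x)| / 2 := by rw [abs_div, abs_two]
          _ ≤ (1/2)^n / 2 := by linarith
          _ = (1/2)^(n+1) := by ring
      · have hz : Cn (n+1) (3*x) - Cn n (3*x) = 0 := by
          rw [Cn_high (n+1) _ (by linarith), Cn_high n _ (by linarith)]; ring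
        have := Cn_diff_bound n (3*x-2)
        rw [key, hz, zero_add]
        calc |(Cn (n+1) (3*x-2) - Cn n (3*x-2)) / 2|
            = |Cn (n+1) (3*x-2) - Cn n (3*x-2)| / 2 := by rw [abs_div, abs_two]
          _ ≤ (1/2)^n / 2 := by linarith
          _ = (1/2)^(n+1) := by ring

/-- The Cantor function (as a limit of the approximations). -/
noncomputable def Cf : ℝ → ℝ := fun x => Cn 0 x + ∑' n, (Cn (n+1) x - Cn n x)

lemma summable_geom_half : Summable (fun n : ℕ => (1/2 : ℝ)^n) :=
  summable_geometric_of_lt_one (by norm_num) (by norm_num)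

lemma Cf_summable (x : ℝ) : Summable (fun n : ℕ => Cn (n+1) x - Cn n x) := by
  apply Summable.of_norm_bounded summable_geom_half
  intro n; simpa using Cn_diff_bound n x

lemma Cf_tendsto (x : ℝ) : Tendsto (fun n => Cn n x) atTop (𝓝 (Cf x)) := by
  have h := (Cf_summable x).hasSum.tendsto_sum_nat
  have key : ∀ n : ℕ, ∑ k ∈ Finset.range n, (Cn (k+1) x - Cn k x) = Cn n x - Cn 0 x := by
    intro n; exact Finset.sum_range_sub (fun k => Cn k x) n
  have h2 : Tendsto (fun n => Cn 0 x + (Cn n x - Cn 0 x)) atTop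
      (𝓝 (Cn 0 x + ∑' k, (Cn (k+1) x - Cn k x))) :=
    tendsto_const_nhds.add (by simpa only [key] using h)
  exact h2.congr (fun n => by ring)

lemma Cf_cont : Continuous Cf := by
  apply (Cn_cont 0).add
  apply continuous_tsum (fun n => ((Cn_cont (n+1)).sub (Cn_cont n))) summable_geom_half
  intro n x; simpa using Cn_diff_bound n x

lemma Cf_low {x : ℝ} (hx : x ≤ 0) : Cf x = 0 := by
  have h2 : Tendsto (fun n => Cn n x) atTop (𝓝 0) := by
    have : (fun n => Cn n x) = fun _ => (0:ℝ) := funext fun n => Cn_low n x hx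
    rw [this]; exact tendsto_const_nhds
  exact tendsto_nhds_unique (Cf_tendsto x) h2

lemma Cf_high {x : ℝ} (hx : 1 ≤ x) : Cf x = 1 := by
  have h2 : Tendsto (fun n => Cn n x) atTop (𝓝 1) := by
    have : (fun n => Cn n x) = fun _ => (1:ℝ) := funext fun n => Cn_high n x hx
    rw [this]; exact tendsto_const_nhds
  exact tendsto_nhds_unique (Cf_tendsto x) h2

lemma Cf_fix (x : ℝ) : Cf x = (Cf (3*x) + Cf (3*x-2)) / 2 := by
  have h1 : Tendsto (fun n => Cn (n+1) x) atTop (𝓝 (Cf x)) :=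
    (Cf_tendsto x).comp (tendsto_add_atTop_nat 1)
  have h2 : Tendsto (fun n => (Cn n (3*x) + Cn n (3*x-2))/2) atTop
      (𝓝 ((Cf (3*x) + Cf (3*x-2))/2)) :=
    ((Cf_tendsto (3*x)).add (Cf_tendsto (3*x-2))).div_const 2
  exact tendsto_nhds_unique h1 (by simpa only [Cn] using h2)

lemma Cf_half : Cf (1/2) = 1/2 := by
  rw [Cf_fix, Cf_high (by norm_num : (1:ℝ) ≤ 3*(1/2)), Cf_low (by norm_num : 3*(1/2)-2 ≤ (0:ℝ))]
  norm_num

end NonremAux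

namespace NonremAux
open Pointwise

/-- Points where a function is locally constant. -/
def LocConst (f : ℝ → ℝ) (x : ℝ) : Prop := ∃ c, ∀ᶠ y in 𝓝 x, f y = c

/-- The bad set of the Cantor function. -/
def Bset : Set ℝ := {x | ¬ LocConst Cf x}

lemma isClosed_bad (f : ℝ → ℝ) : IsClosed {x | ¬ LocConst f x} := by
  rw [← isOpen_compl_iff]
  have : {x | ¬ LocConst f x}ᶜ = {x | LocConst f x} := by ext x; simp
  rw [this]
  rw [isOpen_iff_mem_nhds]
  rintro x ⟨c, hc⟩
  filter_upwards [hc.eventually_nhds] with y hy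
  exact ⟨c, hy⟩

lemma Bset_subset : Bset ⊆ Set.Icc 0 1 := by
  intro x hx
  by_contra hmem
  apply hx
  simp only [Set.mem_Icc, not_and_or, not_le] at hmem
  rcases hmem with h | h
  · exact ⟨0, by filter_upwards [Iio_mem_nhds h] with y hy; exact Cf_low hy.le⟩
  · exact ⟨1, by filter_upwards [Ioi_mem_nhds h] with y hy; exact Cf_high hy.le⟩

lemma Bset_rec {x : ℝ} (hx : x ∈ Bset) : 3*x ∈ Bset ∨ 3*x-2 ∈ Bset := by
  by_contra hcon
  push_neg at hcon
  simp only [Bset, Set.mem_setOf_eq, not_not] at hcon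
  obtain ⟨⟨c1, hc1⟩, ⟨c2, hc2⟩⟩ := hcon
  apply hx
  refine ⟨(c1 + c2)/2, ?_⟩
  have t1 : Tendsto (fun y : ℝ => 3*y) (𝓝 x) (𝓝 (3*x)) := by
    exact (continuous_const.mul continuous_id).tendsto x
  have t2 : Tendsto (fun y : ℝ => 3*y-2) (𝓝 x) (𝓝 (3*x-2)) := by
    exact ((continuous_const.mul continuous_id).sub continuous_const).tendsto x
  filter_upwards [t1.eventually hc1, t2.eventually hc2] with y h1 h2
  rw [Cf_fix y, h1, h2]

lemma Bset_null : volume Bset = 0 := by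
  have hmeas : MeasurableSet Bset := (isClosed_bad Cf).measurableSet
  have hsub : Bset ⊆ ((3:ℝ)⁻¹ • Bset) ∪ ((3:ℝ)⁻¹ • ((2:ℝ) +ᵥ Bset)) := by
    intro x hx
    rcases Bset_rec hx with h | h
    · left
      rw [Set.mem_smul_set_iff_inv_smul_mem₀ (by norm_num : (3:ℝ)⁻¹ ≠ 0)]
      simpa [smul_eq_mul] using h
    · right
      rw [Set.mem_smul_set_iff_inv_smul_mem₀ (by norm_num : (3:ℝ)⁻¹ ≠ 0),
        Set.mem_vadd_set_iff_neg_vadd_mem]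
      simp only [smul_eq_mul, inv_inv, vadd_eq_add]
      have he : -2 + 3*x = 3*x - 2 := by ring
      rw [he]; exact h
  have hsmul : ∀ s : Set ℝ, volume ((3:ℝ)⁻¹ • s) = ENNReal.ofReal (3:ℝ)⁻¹ * volume s := by
    intro s
    rw [Measure.addHaar_smul]
    congr 1
    rw [Module.finrank_self, pow_one, abs_of_pos (by norm_num : (0:ℝ) < 3⁻¹)]
  have hb : volume Bset ≤ ENNReal.ofReal (3:ℝ)⁻¹ * volume Bset
      + ENNReal.ofReal (3:ℝ)⁻¹ * volume Bset := by
    calc volume Bset ≤ volume (((3:ℝ)⁻¹ • Bset) ∪ ((3:ℝ)⁻¹ • ((2:ℝ) +ᵥ Bset))) :=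
          measure_mono hsub
      _ ≤ volume ((3:ℝ)⁻¹ • Bset) + volume ((3:ℝ)⁻¹ • ((2:ℝ) +ᵥ Bset)) := measure_union_le _ _
      _ = ENNReal.ofReal (3:ℝ)⁻¹ * volume Bset + ENNReal.ofReal (3:ℝ)⁻¹ * volume Bset := by
          rw [hsmul, hsmul, measure_vadd]
  have hfin : volume Bset ≠ ⊤ :=
    ((measure_mono Bset_subset).trans_lt (by simp [Real.volume_Icc])).ne
  by_contra hne
  have hlt : ENNReal.ofReal (3:ℝ)⁻¹ * volume Bset + ENNReal.ofReal (3:ℝ)⁻¹ * volume Bset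
      < volume Bset := by
    have h23 : ENNReal.ofReal (3:ℝ)⁻¹ * volume Bset + ENNReal.ofReal (3:ℝ)⁻¹ * volume Bset
        = ENNReal.ofReal (2/3 : ℝ) * volume Bset := by
      rw [← add_mul, ← ENNReal.ofReal_add (by norm_num) (by norm_num)]
      norm_num
    rw [h23]
    conv_rhs => rw [← one_mul (volume Bset)]
    refine ENNReal.mul_lt_mul_left hne hfin ?_
    rw [← ENNReal.ofReal_one]
    exact ENNReal.ofReal_lt_ofReal_iff_of_nonneg (by norm_num) |>.mpr (by norm_num)
  exact absurd hb (not_le.mpr hlt)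

end NonremAux

namespace NonremAux
open Pointwise Complex

/-- The rotation-angle function. -/
noncomputable def phi : ℝ → ℝ := fun r => min (Cf (r-1)) (1 - Cf (r-1))

lemma phi_cont : Continuous phi :=
  ((Cf_cont.comp (continuous_id.sub continuous_const))).min
    (continuous_const.sub (Cf_cont.comp (continuous_id.sub continuous_const)))

lemma phi_of_cf {r : ℝ} {c : ℝ} (h : ∀ᶠ y in 𝓝 (r-1), Cf y = c) :
    ∀ᶠ y in 𝓝 r, phi y = min c (1 - c) := by
  have t : Tendsto (fun y : ℝ => y - 1) (𝓝 r) (𝓝 (r-1)) :=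
    (continuous_id.sub continuous_const).tendsto r
  filter_upwards [t.eventually h] with y hy
  simp [phi, hy]

/-- The bad set of `phi`. -/
def Bphi : Set ℝ := {r | ¬ LocConst phi r}

lemma Bphi_sub : Bphi ⊆ {r : ℝ | r - 1 ∈ Bset} := by
  intro r hr
  by_contra hmem
  simp only [Set.mem_setOf_eq, Bset, not_not, LocConst] at hmem
  obtain ⟨c, hc⟩ := hmem
  exact hr ⟨min c (1 - c), phi_of_cf hc⟩

lemma Bphi_null : volume Bphi = 0 := by
  have h1 : {r : ℝ | r - 1 ∈ Bset} = (1:ℝ) +ᵥ Bset := by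
    ext r
    rw [Set.mem_vadd_set_iff_neg_vadd_mem]
    simp only [vadd_eq_add, Set.mem_setOf_eq]
    have he : -1 + r = r - 1 := by ring
    rw [he]
  have h2 : volume {r : ℝ | r - 1 ∈ Bset} = 0 := by
    rw [h1, measure_vadd]; exact Bset_null
  exact measure_mono_null Bphi_sub h2

lemma Bphi_subset_Icc : Bphi ⊆ Set.Icc 1 2 := by
  intro r hr
  have := Bset_subset (Bphi_sub hr)
  simp only [Set.mem_Icc] at *
  constructor <;> linarith [this.1, this.2]

/-- The non-removable compact set: a "Cantor set of circles". -/
def Sset : Set ℂ := {z | ‖z‖ ∈ Bphi}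

lemma Bphi_closed : IsClosed Bphi := isClosed_bad phi

lemma Sset_compact : IsCompact Sset := by
  apply Metric.isCompact_of_isClosed_isBounded
  · exact Bphi_closed.preimage continuous_norm
  · apply Metric.isBounded_closedBall (x := (0:ℂ)) (r := 2) |>.subset
    intro z hz
    have := Bphi_subset_Icc hz
    simp only [Metric.mem_closedBall, dist_zero_right]
    exact this.2

lemma sin_diff_le (a b : ℝ) : |Real.sin a - Real.sin b| ≤ |a - b| := by
  rw [Real.sin_sub_sin]
  calc |2 * Real.sin ((a-b)/2) * Real.cos ((a+b)/2)|
      = 2 * |Real.sin ((a-b)/2)| * |Real.cos ((a+b)/2)| := by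
        rw [abs_mul, abs_mul, _root_.abs_two]
    _ ≤ 2 * |(a-b)/2| * 1 := by
        apply mul_le_mul (mul_le_mul le_rfl (Real.abs_sin_le_abs) (abs_nonneg _) (by norm_num))
          (Real.abs_cos_le_one _) (abs_nonneg _) (by positivity)
    _ = |a - b| := by rw [abs_div, _root_.abs_two]; ring

lemma cos_diff_le (a b : ℝ) : |Real.cos a - Real.cos b| ≤ |a - b| := by
  rw [Real.cos_sub_cos]
  calc |(-2) * Real.sin ((a+b)/2) * Real.sin ((a-b)/2)|
      = 2 * |Real.sin ((a+b)/2)| * |Real.sin ((a-b)/2)| := by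
        rw [abs_mul, abs_mul, abs_neg, _root_.abs_two]
    _ ≤ 2 * 1 * |(a-b)/2| := by
        apply mul_le_mul (mul_le_mul le_rfl (Real.abs_sin_le_one _) (abs_nonneg _) (by norm_num))
          (Real.abs_sin_le_abs) (abs_nonneg _) (by positivity)
    _ = |a - b| := by rw [abs_div, _root_.abs_two]; ring

lemma expI_diff_le (a b : ℝ) :
    ‖Complex.exp (a * I) - Complex.exp (b * I)‖ ≤ 2 * |a - b| := by
  have hre : (Complex.exp (a * I) - Complex.exp (b * I)).re = Real.cos a - Real.cos b := by
    simp [Complex.sub_re, Complex.exp_ofReal_mul_I_re]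
  have him : (Complex.exp (a * I) - Complex.exp (b * I)).im = Real.sin a - Real.sin b := by
    simp [Complex.sub_im, Complex.exp_ofReal_mul_I_im]
  calc ‖Complex.exp (a * I) - Complex.exp (b * I)‖
      ≤ |(Complex.exp (a * I) - Complex.exp (b * I)).re|
        + |(Complex.exp (a * I) - Complex.exp (b * I)).im| :=
        Complex.norm_le_abs_re_add_abs_im _
    _ = |Real.cos a - Real.cos b| + |Real.sin a - Real.sin b| := by rw [hre, him]
    _ ≤ |a - b| + |a - b| := add_le_add (cos_diff_le a b) (sin_diff_le a b)
    _ = 2 * |a - b| := by ring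

/-- The polar-type parametrization, as a self-map of `ℂ`. -/
noncomputable def pmap : ℂ → ℂ := fun w => (w.re : ℂ) * Complex.exp (w.im * I)

lemma pmap_lip : LipschitzOnWith 7 pmap {w : ℂ | |w.re| ≤ 3} := by
  apply LipschitzOnWith.of_dist_le_mul
  intro p hp q hq
  simp only [Set.mem_setOf_eq] at hp hq
  have hre : |p.re - q.re| ≤ dist p q := by
    rw [dist_eq_norm]
    simpa [Complex.sub_re] using Complex.abs_re_le_norm (p - q)
  have him : |p.im - q.im| ≤ dist p q := by
    rw [dist_eq_norm]
    simpa [Complex.sub_im] using Complex.abs_im_le_norm (p - q)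
  have key : dist (pmap p) (pmap q) ≤ |p.re - q.re| + 3 * (2 * |p.im - q.im|) := by
    rw [dist_eq_norm]
    have hsplit : pmap p - pmap q
        = ((p.re : ℂ) - q.re) * Complex.exp (p.im * I)
          + (q.re : ℂ) * (Complex.exp (p.im * I) - Complex.exp (q.im * I)) := by
      simp only [pmap]; ring
    rw [hsplit]
    calc ‖((p.re : ℂ) - q.re) * Complex.exp (p.im * I)
          + (q.re : ℂ) * (Complex.exp (p.im * I) - Complex.exp (q.im * I))‖
        ≤ ‖((p.re : ℂ) - q.re) * Complex.exp (p.im * I)‖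
          + ‖(q.re : ℂ) * (Complex.exp (p.im * I) - Complex.exp (q.im * I))‖ := norm_add_le _ _
      _ = ‖((p.re : ℂ) - q.re)‖ * ‖Complex.exp (p.im * I)‖
          + ‖(q.re : ℂ)‖ * ‖Complex.exp (p.im * I) - Complex.exp (q.im * I)‖ := by
          rw [norm_mul, norm_mul]
      _ ≤ |p.re - q.re| * 1 + 3 * (2 * |p.im - q.im|) := by
          apply add_le_add
          · apply mul_le_mul _ _ (norm_nonneg _) (abs_nonneg _)
            · rw [← Complex.ofReal_sub, Complex.norm_real, Real.norm_eq_abs]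
            · rw [Complex.norm_exp_ofReal_mul_I]
          · apply mul_le_mul
            · rw [Complex.norm_real, Real.norm_eq_abs]; exact hq
            · exact expI_diff_le _ _
            · exact norm_nonneg _
            · norm_num
      _ = |p.re - q.re| + 3 * (2 * |p.im - q.im|) := by ring
  calc dist (pmap p) (pmap q) ≤ |p.re - q.re| + 3 * (2 * |p.im - q.im|) := key
    _ ≤ dist p q + 3 * (2 * dist p q) := by
        apply add_le_add hre
        have : |p.im - q.im| ≤ dist p q := him
        linarith
    _ = 7 * dist p q := by ring

end NonremAux

namespace NonremAux
open Pointwise Complex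

lemma haar_complex_hausdorff : (μH[(2:ℝ)] : Measure ℂ).IsAddHaarMeasure := by
  have h := MeasureTheory.isAddHaarMeasure_hausdorffMeasure (E := ℂ)
  rwa [Complex.finrank_real_complex, Nat.cast_ofNat] at h

/-- Transfer of null sets between `volume` and `μH[2]` on `ℂ`. -/
lemma volume_eq_zero_iff_hausdorff {s : Set ℂ} :
    volume s = 0 ↔ (μH[(2:ℝ)] : Measure ℂ) s = 0 := by
  haveI := haar_complex_hausdorff
  constructor
  · intro h
    have heq := Measure.isAddLeftInvariant_eq_smul (μH[(2:ℝ)] : Measure ℂ) volume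
    rw [heq, Measure.smul_apply, h, smul_zero]
  · intro h
    have heq := Measure.isAddLeftInvariant_eq_smul (volume : Measure ℂ) (μH[(2:ℝ)] : Measure ℂ)
    rw [heq, Measure.smul_apply, h, smul_zero]

lemma lipschitzOn_image_null {s : Set ℂ} {f : ℂ → ℂ} {K : NNReal}
    (hf : LipschitzOnWith K f s) (hs : volume s = 0) : volume (f '' s) = 0 := by
  rw [volume_eq_zero_iff_hausdorff] at hs ⊢
  have := hf.hausdorffMeasure_image_le (by norm_num : (0:ℝ) ≤ 2)
  rw [hs, mul_zero] at this
  exact le_antisymm this (zero_le)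

/-- The rectangle in `ℂ` parametrizing `Sset` in polar coordinates. -/
def rect : Set ℂ := {w : ℂ | w.re ∈ Bphi ∧ w.im ∈ Set.Icc (-4:ℝ) 4}

lemma rect_null : volume rect = 0 := by
  have h : rect = Complex.measurableEquivRealProd ⁻¹' (Bphi ×ˢ Set.Icc (-4:ℝ) 4) := by
    ext w
    simp [rect, Complex.measurableEquivRealProd, Set.mem_prod]
  rw [h, Complex.volume_preserving_equiv_real_prod.measure_preimage]
  · rw [Measure.volume_eq_prod, Measure.prod_prod, Bphi_null, zero_mul]
  · exact ((Bphi_closed.measurableSet).prod measurableSet_Icc).nullMeasurableSet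

lemma rect_sub : rect ⊆ {w : ℂ | |w.re| ≤ 3} := by
  rintro w ⟨h1, _⟩
  have := Bphi_subset_Icc h1
  simp only [Set.mem_Icc] at this
  simp only [Set.mem_setOf_eq, abs_le]
  constructor <;> linarith [this.1, this.2]

lemma Sset_sub_image : Sset ⊆ pmap '' rect := by
  intro z hz
  refine ⟨⟨‖z‖, z.arg⟩, ⟨hz, ?_, ?_⟩, ?_⟩
  · have := Complex.neg_pi_lt_arg z
    have hp := Real.pi_le_four
    linarith
  · exact (Complex.arg_le_pi z).trans Real.pi_le_four
  · show ((‖z‖ : ℝ) : ℂ) * Complex.exp ((z.arg : ℝ) * I) = z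
    exact Complex.norm_mul_exp_arg_mul_I z

lemma Sset_null : volume Sset = 0 := by
  apply measure_mono_null Sset_sub_image
  exact lipschitzOn_image_null (pmap_lip.mono rect_sub) rect_null

/-- The gluing homeomorphism: rotation by angle `phi ‖z‖` on each circle. -/
noncomputable def hfun : ℂ → ℂ := fun z => Complex.exp ((phi ‖z‖ : ℝ) * I) * z

noncomputable def hinv : ℂ → ℂ := fun z => Complex.exp (-((phi ‖z‖ : ℝ) * I)) * z

lemma hfun_norm (z : ℂ) : ‖hfun z‖ = ‖z‖ := by
  rw [hfun, norm_mul, Complex.norm_exp_ofReal_mul_I, one_mul]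

lemma hinv_norm (z : ℂ) : ‖hinv z‖ = ‖z‖ := by
  rw [hinv, norm_mul]
  have : ‖Complex.exp (-((phi ‖z‖ : ℝ) * I))‖ = 1 := by
    have he : -((phi ‖z‖ : ℝ) * I) = ((-(phi ‖z‖) : ℝ) : ℂ) * I := by push_cast; ring
    rw [he, Complex.norm_exp_ofReal_mul_I]
  rw [this, one_mul]

lemma hinv_hfun (z : ℂ) : hinv (hfun z) = z := by
  rw [hinv, hfun_norm, hfun, ← mul_assoc, ← Complex.exp_add]
  simp

lemma hfun_hinv (z : ℂ) : hfun (hinv z) = z := by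
  rw [hfun, hinv_norm, hinv, ← mul_assoc, ← Complex.exp_add]
  simp

lemma hfun_cont : Continuous hfun :=
  (Complex.continuous_exp.comp ((Complex.continuous_ofReal.comp
    (phi_cont.comp continuous_norm)).mul continuous_const)).mul continuous_id

lemma hinv_cont : Continuous hinv :=
  (Complex.continuous_exp.comp (((Complex.continuous_ofReal.comp
    (phi_cont.comp continuous_norm)).mul continuous_const).neg)).mul continuous_id

/-- The homeomorphism. -/
noncomputable def hHomeo : ℂ ≃ₜ ℂ where
  toFun := hfun
  invFun := hinv
  left_inv := hinv_hfun
  right_inv := hfun_hinv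
  continuous_toFun := hfun_cont
  continuous_invFun := hinv_cont

lemma hfun_diff {z : ℂ} (hz : z ∉ Sset) : DifferentiableAt ℂ hfun z := by
  have hz' : LocConst phi ‖z‖ := by
    by_contra hcon
    exact hz hcon
  obtain ⟨c, hc⟩ := hz'
  have hev : ∀ᶠ w in 𝓝 z, phi ‖w‖ = c := (continuous_norm.tendsto z).eventually hc
  have heq : hfun =ᶠ[𝓝 z] (fun w => Complex.exp ((c:ℝ) * I) * w) := by
    filter_upwards [hev] with w hw
    rw [hfun, hw]
  rw [heq.differentiableAt_iff]
  exact (differentiableAt_id.const_mul _)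

lemma phi_three : phi 3 = 0 := by
  have : Cf (3 - 1) = 1 := Cf_high (by norm_num)
  simp [phi, this]

lemma phi_three_halves : phi (3/2) = 1/2 := by
  have he : (3/2 : ℝ) - 1 = 1/2 := by norm_num
  rw [phi, he, Cf_half]
  norm_num

lemma hfun_not_affine : ¬ ∃ a b : ℂ, ∀ z : ℂ, hfun z = a * z + b := by
  rintro ⟨a, b, hab⟩
  have h0 : hfun 0 = 0 := by simp [hfun]
  have hb : b = 0 := by
    have := hab 0
    rw [h0] at this
    simpa using this.symm
  have h3 : hfun ((3:ℝ) : ℂ) = 3 := by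
    rw [hfun]
    have hn : ‖((3:ℝ) : ℂ)‖ = 3 := by
      rw [Complex.norm_real, Real.norm_eq_abs]; norm_num
    rw [hn, phi_three]
    simp
  have ha : a = 1 := by
    have := hab ((3:ℝ) : ℂ)
    rw [h3, hb, add_zero] at this
    have h3ne : ((3:ℝ) : ℂ) ≠ 0 := by norm_num
    field_simp at this
    push_cast at this
    linear_combination (-1/3 : ℂ) * this
  have h32 : hfun ((3/2 : ℝ) : ℂ) = Complex.exp (((1/2 : ℝ) : ℂ) * I) * ((3/2 : ℝ) : ℂ) := by
    rw [hfun]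
    have hn : ‖((3/2:ℝ) : ℂ)‖ = 3/2 := by
      rw [Complex.norm_real, Real.norm_eq_abs]; norm_num
    rw [hn, phi_three_halves]
  have := hab ((3/2 : ℝ) : ℂ)
  rw [h32, hb, ha, add_zero, one_mul] at this
  have hne : ((3/2 : ℝ) : ℂ) ≠ 0 := by norm_num
  have hexp : Complex.exp (((1/2 : ℝ) : ℂ) * I) = 1 := by
    field_simp at this
    exact this
  have him : Real.sin (1/2) = 0 := by
    have := congrArg Complex.im hexp
    rwa [Complex.exp_ofReal_mul_I_im, Complex.one_im] at this
  have hpos : 0 < Real.sin (1/2) :=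
    Real.sin_pos_of_pos_of_lt_pi (by norm_num) (by linarith [Real.pi_gt_three])
  linarith

end NonremAux

/-- There exists a conformally non-removable compact set of two-dimensional Lebesgue
measure zero: a compact `S ⊆ ℂ` with `volume S = 0` and a homeomorphism `h : ℂ → ℂ`
which is holomorphic on `ℂ \ S` but is not affine. -/
theorem exists_nonremovable_compact_null_set :
    ∃ S : Set ℂ, IsCompact S ∧ MeasureTheory.volume S = 0 ∧
      ∃ h : ℂ ≃ₜ ℂ, (∀ z ∉ S, DifferentiableAt ℂ (⇑h) z) ∧
        ¬ ∃ a b : ℂ, ∀ z : ℂ, h z = a * z + b := by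
  refine ⟨NonremAux.Sset, NonremAux.Sset_compact, NonremAux.Sset_null,
    NonremAux.hHomeo, ?_, ?_⟩
  · intro z hz
    exact NonremAux.hfun_diff hz
  · rintro ⟨a, b, hab⟩
    exact NonremAux.hfun_not_affine ⟨a, b, hab⟩
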